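/- arXiv:2510.11962 — 3 statements merged into one kernel-verified Lean document; each statement's English description precedes it below -/
import Mathlib

section
/- Let T be a positive natural number, let x₀ ∈ ℝ, and let β : Fin T → ℝ with 0 < β_t < 1 for all t. Set α_t := 1 − β_t and ᾱ_t := ∏_{s ≤ t} α_s. Consider the product measure ⊗_{t<T} N(0,1) on ℝ^T and define recursively X_0(z) := √α_0·x₀ + √β_0·z_0 and X_{t}(z) := √α_t·X_{t−1}(z) + √β_t·z_t for t ≥ 1, where z = (z_0,…,z_{T−1}) ∈ ℝ^T. Then for every t < T, the pushforward of ⊗_{s<T} N(0,1) under the map z ↦ X_t(z) equals the Gaussian measure N(√ᾱ_t·x₀, 1 − ᾱ_t). -/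
open MeasureTheory ProbabilityTheory

set_option maxHeartbeats 1000000
open Real
open scoped NNReal ENNReal

lemma cast_quad (b c d x : ℝ) : (b:ℂ) * (x:ℂ) ^ 2 + (c:ℂ) * (x:ℂ) + (d:ℂ)
    = ((b * x ^ 2 + c * x + d : ℝ) : ℂ) := by push_cast; ring

lemma integrable_rexp_quadratic {b : ℝ} (hb : b < 0) (c d : ℝ) :
    Integrable (fun x : ℝ => Real.exp (b * x ^ 2 + c * x + d)) := by
  have h : ((b : ℂ)).re < 0 := by simpa using hb
  have := (integrable_cexp_quadratic' h c d).re
  refine this.congr (Filter.Eventually.of_forall fun x => ?_)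
  simp only [cast_quad b c d x, RCLike.re_eq_complex_re, Complex.exp_ofReal_re]

lemma integral_rexp_quadratic {b : ℝ} (hb : b < 0) (c d : ℝ) :
    ∫ x : ℝ, Real.exp (b * x ^ 2 + c * x + d)
      = Real.sqrt (π / -b) * Real.exp (d - c ^ 2 / (4 * b)) := by
  have h : ((b : ℂ)).re < 0 := by simpa using hb
  have key := integral_cexp_quadratic h c d
  simp_rw [cast_quad b c d] at key
  have hi : Integrable (fun x : ℝ => Complex.exp ((b * x ^ 2 + c * x + d : ℝ) : ℂ)) := by
    simp_rw [← cast_quad b c d]; exact integrable_cexp_quadratic' h c d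
  have hre : ∫ x : ℝ, Real.exp (b * x ^ 2 + c * x + d)
      = (∫ x : ℝ, Complex.exp ((b * x ^ 2 + c * x + d : ℝ) : ℂ)).re := by
    rw [← RCLike.re_eq_complex_re, ← integral_re hi]
    refine integral_congr_ae (Filter.Eventually.of_forall fun x => ?_)
    simp only [RCLike.re_eq_complex_re, Complex.exp_ofReal_re]
  rw [hre, key]
  have h2 : ((π : ℂ) / -(b:ℂ)) ^ (1 / 2 : ℂ) = ((Real.sqrt (π / -b) : ℝ) : ℂ) := by
    rw [show ((π : ℂ) / -(b:ℂ)) = ((π / -b : ℝ) : ℂ) by push_cast; ring,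
      Real.sqrt_eq_rpow, show (1/2 : ℂ) = ((1/2 : ℝ) : ℂ) by norm_num,
      ← Complex.ofReal_cpow (div_nonneg Real.pi_pos.le (by linarith))]
  have h4 : ((d:ℂ) - (c:ℂ)^2/(4*(b:ℂ))) = ((d - c^2/(4*b) : ℝ) : ℂ) := by push_cast; ring
  rw [h2, h4, ← Complex.ofReal_exp, ← Complex.ofReal_mul, Complex.ofReal_re]

lemma gaussianPDFReal_conv {v₁ v₂ : ℝ≥0} (hv₁ : v₁ ≠ 0) (hv₂ : v₂ ≠ 0) (μ₁ μ₂ y : ℝ) :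
    ∫ x : ℝ, gaussianPDFReal μ₁ v₁ x * gaussianPDFReal μ₂ v₂ (y - x)
      = gaussianPDFReal (μ₁ + μ₂) (v₁ + v₂) y := by
  have hV₁ : (0:ℝ) < v₁ := lt_of_le_of_ne v₁.coe_nonneg (by exact_mod_cast (Ne.symm hv₁))
  have hV₂ : (0:ℝ) < v₂ := lt_of_le_of_ne v₂.coe_nonneg (by exact_mod_cast (Ne.symm hv₂))
  set V₁ : ℝ := (v₁ : ℝ) with hV₁def
  set V₂ : ℝ := (v₂ : ℝ) with hV₂def
  have hb : (-(V₁ + V₂) / (2 * V₁ * V₂)) < 0 := by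
    apply div_neg_of_neg_of_pos <;> nlinarith
  set b : ℝ := -(V₁ + V₂) / (2 * V₁ * V₂) with hbdef
  set c : ℝ := μ₁ / V₁ + (y - μ₂) / V₂ with hcdef
  set d : ℝ := -μ₁ ^ 2 / (2 * V₁) - (y - μ₂) ^ 2 / (2 * V₂) with hddef
  have hpt : ∀ x : ℝ, gaussianPDFReal μ₁ v₁ x * gaussianPDFReal μ₂ v₂ (y - x)
      = (Real.sqrt (2 * π * V₁))⁻¹ * (Real.sqrt (2 * π * V₂))⁻¹
        * Real.exp (b * x ^ 2 + c * x + d) := by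
    intro x
    rw [gaussianPDFReal, gaussianPDFReal]
    rw [show ∀ a₁ a₂ b₁ b₂ : ℝ, (a₁ * a₂) * (b₁ * b₂) = (a₁ * b₁) * (a₂ * b₂) from
      fun _ _ _ _ => by ring, ← Real.exp_add]
    congr 1
    congr 1
    rw [← hV₁def, ← hV₂def]
    rw [hbdef, hcdef, hddef]
    field_simp
    ring
  simp_rw [hpt]
  rw [integral_const_mul, integral_rexp_quadratic hb c d, gaussianPDFReal]
  have hsum : (0:ℝ) < V₁ + V₂ := by linarith
  have hexp : d - c ^ 2 / (4 * b) = -(y - (μ₁ + μ₂)) ^ 2 / (2 * ((v₁ : ℝ) + v₂)) := by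
    have hb4 : 4 * b = -(2 * (V₁ + V₂)) / (V₁ * V₂) := by
      rw [hbdef]; field_simp; ring
    rw [hb4, hcdef, hddef, div_div_eq_mul_div]
    rw [show ((v₁:ℝ) + v₂) = V₁ + V₂ from rfl]
    field_simp
    ring
  have hconst : (Real.sqrt (2 * π * V₁))⁻¹ * ((Real.sqrt (2 * π * V₂))⁻¹ * Real.sqrt (π / -b))
      = (Real.sqrt (2 * π * ((v₁ : ℝ) + v₂)))⁻¹ := by
    rw [← Real.sqrt_inv, ← Real.sqrt_inv, ← Real.sqrt_mul (by positivity),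
      ← Real.sqrt_mul (by positivity), ← Real.sqrt_inv]
    congr 1
    rw [hbdef]
    field_simp
    ring
  rw [hexp]
  push_cast
  linear_combination rexp (-(y - (μ₁ + μ₂)) ^ 2 / (2 * ((v₁:ℝ) + v₂))) * hconst


lemma gaussianPDFReal_le (μ : ℝ) (v : ℝ≥0) (x : ℝ) :
    gaussianPDFReal μ v x ≤ (Real.sqrt (2 * π * v))⁻¹ := by
  rw [gaussianPDFReal]
  have h1 : Real.exp (-(x - μ) ^ 2 / (2 * v)) ≤ 1 := by
    rw [Real.exp_le_one_iff]
    apply div_nonpos_of_nonpos_of_nonneg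
    · nlinarith [sq_nonneg (x - μ)]
    · positivity
  nlinarith [Real.sqrt_nonneg (2 * π * v), inv_nonneg.mpr (Real.sqrt_nonneg (2 * π * v))]

lemma integrable_pdf_mul (μ₁ μ₂ : ℝ) (v₁ v₂ : ℝ≥0) (y : ℝ) :
    Integrable (fun x : ℝ => gaussianPDFReal μ₁ v₁ x * gaussianPDFReal μ₂ v₂ (y - x)) := by
  refine Integrable.bdd_mul ((integrable_gaussianPDFReal μ₂ v₂).comp_sub_left y)
    (measurable_gaussianPDFReal μ₁ v₁).aestronglyMeasurable
    (c := (Real.sqrt (2 * π * v₁))⁻¹) (Filter.Eventually.of_forall fun x => ?_)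
  rw [Real.norm_eq_abs, abs_of_nonneg (gaussianPDFReal_nonneg _ _ _)]
  exact gaussianPDFReal_le _ _ _

lemma gaussianReal_prod_add (μ₁ μ₂ : ℝ) (v₁ v₂ : ℝ≥0) :
    Measure.map (fun p : ℝ × ℝ => p.1 + p.2)
        ((gaussianReal μ₁ v₁).prod (gaussianReal μ₂ v₂))
      = gaussianReal (μ₁ + μ₂) (v₁ + v₂) := by
  by_cases hv₁ : v₁ = 0
  · subst hv₁
    rw [gaussianReal_zero_var, Measure.dirac_prod,
      Measure.map_map measurable_add (measurable_prodMk_left)]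
    have : ((fun p : ℝ × ℝ => p.1 + p.2) ∘ Prod.mk μ₁) = (fun y => μ₁ + y) := rfl
    rw [this, gaussianReal_map_const_add, add_comm μ₂ μ₁, zero_add]
  by_cases hv₂ : v₂ = 0
  · subst hv₂
    rw [gaussianReal_zero_var, Measure.prod_dirac,
      Measure.map_map measurable_add (measurable_prodMk_right)]
    have : ((fun p : ℝ × ℝ => p.1 + p.2) ∘ (fun x => (x, μ₂))) = (fun x => x + μ₂) := rfl
    rw [this, gaussianReal_map_add_const, add_zero]
  -- main case
  have hv : v₁ + v₂ ≠ 0 := by simp [hv₁]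
  ext s hs
  rw [Measure.map_apply measurable_add hs,
    Measure.prod_apply (measurable_add hs)]
  have hpre : ∀ x : ℝ, (Prod.mk x ⁻¹' ((fun p : ℝ × ℝ => p.1 + p.2) ⁻¹' s))
      = (fun y => x + y) ⁻¹' s := fun x => rfl
  have hsec : ∀ x : ℝ, gaussianReal μ₂ v₂ ((fun y => x + y) ⁻¹' s)
      = ∫⁻ y in s, ENNReal.ofReal (gaussianPDFReal μ₂ v₂ (y - x)) := by
    intro x
    rw [← Measure.map_apply (measurable_const_add x) hs, gaussianReal_map_const_add x,
      gaussianReal_apply _ hv₂ s]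
    refine lintegral_congr fun y => ?_
    simp only [gaussianPDF_def]
    rw [gaussianPDFReal_sub y x]
  simp_rw [hpre, hsec]
  rw [gaussianReal_of_var_ne_zero _ hv₁,
    lintegral_withDensity_eq_lintegral_mul _ (measurable_gaussianPDF _ _)
      (by
        have h : Measurable (Function.uncurry fun x y : ℝ =>
            ENNReal.ofReal (gaussianPDFReal μ₂ v₂ (y - x))) :=
          ((measurable_gaussianPDFReal μ₂ v₂).comp
            (measurable_snd.sub measurable_fst)).ennreal_ofReal
        exact h.lintegral_prod_right)]
  simp only [Pi.mul_apply]
  have hmeas2 : Measurable (Function.uncurry fun x y : ℝ =>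
      gaussianPDF μ₁ v₁ x * ENNReal.ofReal (gaussianPDFReal μ₂ v₂ (y - x))) := by
    refine Measurable.mul (f := fun p : ℝ × ℝ => gaussianPDF μ₁ v₁ p.1)
      (g := fun p : ℝ × ℝ => ENNReal.ofReal (gaussianPDFReal μ₂ v₂ (p.2 - p.1))) ?_ ?_
    · exact (measurable_gaussianPDF _ _).comp measurable_fst
    · exact ((measurable_gaussianPDFReal μ₂ v₂).comp
        (measurable_snd.sub measurable_fst)).ennreal_ofReal
  calc ∫⁻ x, gaussianPDF μ₁ v₁ x * ∫⁻ y in s, ENNReal.ofReal (gaussianPDFReal μ₂ v₂ (y - x))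
      = ∫⁻ x, ∫⁻ y in s, gaussianPDF μ₁ v₁ x
          * ENNReal.ofReal (gaussianPDFReal μ₂ v₂ (y - x)) := by
        refine lintegral_congr fun x => ?_
        rw [lintegral_const_mul _ (show Measurable fun y : ℝ =>
          ENNReal.ofReal (gaussianPDFReal μ₂ v₂ (y - x)) from
          ((measurable_gaussianPDFReal μ₂ v₂).comp
            (measurable_id.sub_const x)).ennreal_ofReal)]
    _ = ∫⁻ y in s, ∫⁻ x, gaussianPDF μ₁ v₁ x
          * ENNReal.ofReal (gaussianPDFReal μ₂ v₂ (y - x)) := by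
        rw [lintegral_lintegral_swap hmeas2.aemeasurable]
    _ = ∫⁻ y in s, gaussianPDF (μ₁ + μ₂) (v₁ + v₂) y := by
        refine lintegral_congr fun y => ?_
        rw [gaussianPDF_def]
        simp_rw [gaussianPDF_def, ← ENNReal.ofReal_mul (gaussianPDFReal_nonneg μ₁ v₁ _)]
        rw [← ofReal_integral_eq_lintegral_ofReal (integrable_pdf_mul μ₁ μ₂ v₁ v₂ y)
          (Filter.Eventually.of_forall fun x =>
            mul_nonneg (gaussianPDFReal_nonneg _ _ _) (gaussianPDFReal_nonneg _ _ _)),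
          gaussianPDFReal_conv hv₁ hv₂]
    _ = gaussianReal (μ₁ + μ₂) (v₁ + v₂) s := (gaussianReal_apply _ hv s).symm

lemma map_eval_pi {ι : Type*} [Fintype ι] {αi : ι → Type*} [∀ i, MeasurableSpace (αi i)]
    (μ : ∀ i, Measure (αi i)) [∀ i, IsProbabilityMeasure (μ i)] (i : ι) :
    Measure.map (fun z => z i) (Measure.pi μ) = μ i := by
  classical
  ext s hs
  rw [Measure.map_apply (measurable_pi_apply i) hs]
  have : (fun z : ∀ j, αi j => z i) ⁻¹' s
      = Set.pi Set.univ (Function.update (fun j => (Set.univ : Set (αi j))) i s) :=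
    Set.eval_preimage
  rw [this, Measure.pi_pi]
  rw [Finset.prod_eq_single i]
  · rw [Function.update_self]
  · intro j _ hj
    rw [Function.update_of_ne hj]
    exact measure_univ
  · intro h; exact absurd (Finset.mem_univ i) h


lemma map_affine_prod (a b m : ℝ) (v : ℝ≥0) :
    Measure.map (fun p : ℝ × ℝ => a * p.1 + b * p.2)
        ((gaussianReal m v).prod (gaussianReal 0 1))
      = gaussianReal (a * m) (⟨a ^ 2, sq_nonneg a⟩ * v + ⟨b ^ 2, sq_nonneg b⟩ * 1) := by
  have hcomp : (fun p : ℝ × ℝ => a * p.1 + b * p.2)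
      = (fun p : ℝ × ℝ => p.1 + p.2) ∘ (Prod.map (fun x => a * x) (fun x => b * x)) := rfl
  rw [hcomp, ← Measure.map_map measurable_add
      ((measurable_const_mul a).prodMap (measurable_const_mul b)),
    ← Measure.map_prod_map _ _ (measurable_const_mul a) (measurable_const_mul b)]
  rw [show (Measure.map (fun x => a * x) (gaussianReal m v)) = gaussianReal (a * m)
      (⟨a ^ 2, sq_nonneg a⟩ * v) from gaussianReal_map_const_mul a,
    show (Measure.map (fun x => b * x) (gaussianReal 0 1)) = gaussianReal (b * 0)
      (⟨b ^ 2, sq_nonneg b⟩ * 1) from gaussianReal_map_const_mul b,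
    gaussianReal_prod_add]
  rw [mul_zero, add_zero]


noncomputable def extFun {T : ℕ} (p : Fin T → Prop) [DecidablePred p]
    (w : {i // p i} → ℝ) : Fin T → ℝ := fun i => if hpi : p i then w ⟨i, hpi⟩ else 0

lemma measurable_extFun {T : ℕ} (p : Fin T → Prop) [DecidablePred p] :
    Measurable (extFun p) := by
  apply measurable_pi_lambda
  intro i
  by_cases hpi : p i
  · simp only [extFun, dif_pos hpi]; exact measurable_pi_apply _
  · simp only [extFun, dif_neg hpi]; exact measurable_const

lemma step_map {T : ℕ} (n : ℕ) (h : n + 1 < T) (Y : (Fin T → ℝ) → ℝ)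
    (hYm : Measurable Y)
    (hYl : ∀ z z' : Fin T → ℝ, (∀ s : Fin T, (s : ℕ) ≤ n → z s = z' s) → Y z = Y z')
    (m : ℝ) (v : ℝ≥0)
    (hY : Measure.map Y (Measure.pi fun _ : Fin T => gaussianReal 0 1) = gaussianReal m v)
    (a b : ℝ) :
    Measure.map (fun z => a * Y z + b * z ⟨n + 1, h⟩)
        (Measure.pi fun _ : Fin T => gaussianReal 0 1)
      = gaussianReal (a * m) (⟨a ^ 2, sq_nonneg a⟩ * v + ⟨b ^ 2, sq_nonneg b⟩ * 1) := by
  classical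
  have hnotp : ¬ ((⟨n + 1, h⟩ : Fin T) : ℕ) ≤ n := by simp
  have hme := measurePreserving_piEquivPiSubtypeProd
    (fun _ : Fin T => gaussianReal 0 1) (fun i : Fin T => (i : ℕ) ≤ n)
  have hφm : Measurable (Y ∘ extFun (fun i : Fin T => (i : ℕ) ≤ n)) :=
    hYm.comp (measurable_extFun _)
  have hψm : Measurable (fun w : {i : Fin T // ¬ (i : ℕ) ≤ n} → ℝ =>
      w ⟨⟨n + 1, h⟩, hnotp⟩) := measurable_pi_apply _
  have key1 : ∀ z : Fin T → ℝ,
      Y (extFun (fun i : Fin T => (i : ℕ) ≤ n)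
        ((MeasurableEquiv.piEquivPiSubtypeProd (fun _ : Fin T => ℝ)
          (fun i : Fin T => (i : ℕ) ≤ n) z).1)) = Y z := by
    intro z
    refine hYl _ z fun s hs => ?_
    simp only [extFun, Function.comp_apply, dif_pos hs]
    rfl
  have hcomp : (fun z : Fin T → ℝ => a * Y z + b * z ⟨n + 1, h⟩)
      = (fun q : ℝ × ℝ => a * q.1 + b * q.2)
        ∘ (Prod.map (Y ∘ extFun (fun i : Fin T => (i : ℕ) ≤ n))
            (fun w : {i : Fin T // ¬ (i : ℕ) ≤ n} → ℝ => w ⟨⟨n + 1, h⟩, hnotp⟩))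
        ∘ (MeasurableEquiv.piEquivPiSubtypeProd (fun _ : Fin T => ℝ)
            (fun i : Fin T => (i : ℕ) ≤ n)) := by
    funext z
    simp only [Function.comp_apply, Prod.map_fst, Prod.map_snd, Prod.map_apply]
    rw [key1 z]
    rfl
  rw [hcomp,
    ← Measure.map_map (by fun_prop)
      ((hφm.prodMap hψm).comp (MeasurableEquiv.piEquivPiSubtypeProd
        (fun _ : Fin T => ℝ) (fun i : Fin T => (i : ℕ) ≤ n)).measurable),
    ← Measure.map_map (hφm.prodMap hψm) (MeasurableEquiv.piEquivPiSubtypeProd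
        (fun _ : Fin T => ℝ) (fun i : Fin T => (i : ℕ) ≤ n)).measurable,
    hme.map_eq,
    ← Measure.map_prod_map _ _ hφm hψm]
  have hmapψ : Measure.map (fun w : {i : Fin T // ¬ (i : ℕ) ≤ n} → ℝ =>
        w ⟨⟨n + 1, h⟩, hnotp⟩)
      (Measure.pi fun _ : {i : Fin T // ¬ (i : ℕ) ≤ n} => gaussianReal 0 1)
      = gaussianReal 0 1 := map_eval_pi _ _
  have hmapφ : Measure.map (Y ∘ extFun (fun i : Fin T => (i : ℕ) ≤ n))
      (Measure.pi fun _ : {i : Fin T // (i : ℕ) ≤ n} => gaussianReal 0 1)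
      = gaussianReal m v := by
    have hfst : Measure.map Prod.fst
        ((Measure.pi fun _ : {i : Fin T // (i : ℕ) ≤ n} => gaussianReal 0 1).prod
          (Measure.pi fun _ : {i : Fin T // ¬ (i : ℕ) ≤ n} => gaussianReal 0 1))
        = Measure.pi fun _ : {i : Fin T // (i : ℕ) ≤ n} => gaussianReal 0 1 := by
      rw [Measure.map_fst_prod]; simp
    rw [← hfst, Measure.map_map hφm measurable_fst, ← hme.map_eq,
      Measure.map_map (hφm.comp measurable_fst) (MeasurableEquiv.piEquivPiSubtypeProd
        (fun _ : Fin T => ℝ) (fun i : Fin T => (i : ℕ) ≤ n)).measurable]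
    rw [show ((Y ∘ extFun (fun i : Fin T => (i : ℕ) ≤ n)) ∘ Prod.fst)
        ∘ (MeasurableEquiv.piEquivPiSubtypeProd (fun _ : Fin T => ℝ)
            (fun i : Fin T => (i : ℕ) ≤ n)) = Y from funext fun z => key1 z]
    exact hY
  rw [hmapφ, hmapψ, map_affine_prod]


/-- Closed-form marginal of the diffusion forward process (Equation (3)/(4) of the
paper), one coordinate: with `α_t := 1 − β_t`, `ᾱ_t := ∏_{s ≤ t} α_s`, and the
recursion `X_0(z) = √α_0·x₀ + √β_0·z_0`, `X_{t+1}(z) = √α_{t+1}·X_t(z) + √β_{t+1}·z_{t+1}`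
driven by i.i.d. standard Gaussian coordinates `z ~ ⊗_{t<T} N(0,1)`, the law of
`X_t` is `N(√ᾱ_t·x₀, 1 − ᾱ_t)`. -/
theorem forward_process_closed_form (T : ℕ) (hT : 0 < T) (x₀ : ℝ)
    (β : Fin T → ℝ) (hβ : ∀ t, 0 < β t ∧ β t < 1)
    (α : Fin T → ℝ) (hα : ∀ t, α t = 1 - β t)
    (abar : Fin T → ℝ) (habar : ∀ t, abar t = ∏ s ∈ Finset.Iic t, α s)
    (X : Fin T → (Fin T → ℝ) → ℝ)
    (hX0 : ∀ z : Fin T → ℝ,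
      X ⟨0, hT⟩ z = Real.sqrt (α ⟨0, hT⟩) * x₀ + Real.sqrt (β ⟨0, hT⟩) * z ⟨0, hT⟩)
    (hXrec : ∀ (t : ℕ) (ht : t + 1 < T) (z : Fin T → ℝ),
      X ⟨t + 1, ht⟩ z
        = Real.sqrt (α ⟨t + 1, ht⟩) * X ⟨t, Nat.lt_of_succ_lt ht⟩ z
          + Real.sqrt (β ⟨t + 1, ht⟩) * z ⟨t + 1, ht⟩) :
    ∀ t : Fin T,
      Measure.map (X t) (Measure.pi fun _ : Fin T => gaussianReal 0 1)
        = gaussianReal (Real.sqrt (abar t) * x₀) (Real.toNNReal (1 - abar t)) := by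
  classical
  have hα_pos : ∀ t, 0 < α t := fun t => by rw [hα]; linarith [(hβ t).2]
  have hα_lt : ∀ t, α t < 1 := fun t => by rw [hα]; linarith [(hβ t).1]
  have habar_pos : ∀ t, 0 < abar t := fun t => by
    rw [habar]; exact Finset.prod_pos fun s _ => hα_pos s
  have habar_le : ∀ t, abar t ≤ 1 := fun t => by
    rw [habar]
    exact Finset.prod_le_one (fun s _ => (hα_pos s).le) (fun s _ => (hα_lt s).le)
  have habar0 : abar ⟨0, hT⟩ = α ⟨0, hT⟩ := by
    rw [habar, show Finset.Iic (⟨0, hT⟩ : Fin T) = {⟨0, hT⟩} from by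
      ext s; simp [Fin.le_def, Fin.ext_iff, Nat.le_zero], Finset.prod_singleton]
  have habar_rec : ∀ (n : ℕ) (h : n + 1 < T),
      abar ⟨n + 1, h⟩ = α ⟨n + 1, h⟩ * abar ⟨n, Nat.lt_of_succ_lt h⟩ := by
    intro n h
    have hins : Finset.Iic (⟨n + 1, h⟩ : Fin T)
        = insert ⟨n + 1, h⟩ (Finset.Iic ⟨n, Nat.lt_of_succ_lt h⟩) := by
      ext s
      simp only [Finset.mem_Iic, Finset.mem_insert, Fin.le_def, Fin.ext_iff]
      omega
    rw [habar, habar, hins, Finset.prod_insert (by simp [Fin.le_def])]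
  -- measurability and locality of X
  have hXaux : ∀ (n : ℕ) (h : n < T), Measurable (X ⟨n, h⟩)
      ∧ ∀ z z' : Fin T → ℝ, (∀ s : Fin T, (s : ℕ) ≤ n → z s = z' s)
        → X ⟨n, h⟩ z = X ⟨n, h⟩ z' := by
    intro n
    induction n with
    | zero =>
      intro h
      constructor
      · have : X ⟨0, h⟩ = fun z => Real.sqrt (α ⟨0, hT⟩) * x₀
            + Real.sqrt (β ⟨0, hT⟩) * z ⟨0, hT⟩ := funext fun z => hX0 z
        rw [this]
        exact measurable_const.add ((measurable_pi_apply _).const_mul _)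
      · intro z z' hzz
        rw [hX0 z, hX0 z', hzz ⟨0, hT⟩ (by simp)]
    | succ n IH =>
      intro h
      have hn := Nat.lt_of_succ_lt h
      obtain ⟨IHm, IHl⟩ := IH hn
      constructor
      · have : X ⟨n + 1, h⟩ = fun z => Real.sqrt (α ⟨n + 1, h⟩) * X ⟨n, hn⟩ z
            + Real.sqrt (β ⟨n + 1, h⟩) * z ⟨n + 1, h⟩ := funext fun z => hXrec n h z
        rw [this]
        exact (IHm.const_mul _).add ((measurable_pi_apply _).const_mul _)
      · intro z z' hzz
        rw [hXrec n h z, hXrec n h z',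
          IHl z z' (fun s hs => hzz s (le_trans hs (Nat.le_succ n))),
          hzz ⟨n + 1, h⟩ (by simp)]
  -- main induction
  suffices H : ∀ (n : ℕ) (h : n < T),
      Measure.map (X ⟨n, h⟩) (Measure.pi fun _ : Fin T => gaussianReal 0 1)
        = gaussianReal (Real.sqrt (abar ⟨n, h⟩) * x₀)
            (Real.toNNReal (1 - abar ⟨n, h⟩)) by
    intro t; exact H t.1 t.2
  intro n
  induction n with
  | zero =>
    intro h
    have hX0' : X ⟨0, h⟩ = (fun y => Real.sqrt (α ⟨0, hT⟩) * x₀ + y)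
        ∘ (fun w => Real.sqrt (β ⟨0, hT⟩) * w) ∘ (fun z : Fin T → ℝ => z ⟨0, hT⟩) :=
      funext fun z => hX0 z
    rw [hX0',
      ← Measure.map_map (measurable_const_add (Real.sqrt (α ⟨0, hT⟩) * x₀))
        ((measurable_const_mul (Real.sqrt (β ⟨0, hT⟩))).comp
          (measurable_pi_apply (⟨0, hT⟩ : Fin T))),
      ← Measure.map_map (measurable_const_mul (Real.sqrt (β ⟨0, hT⟩)))
        (measurable_pi_apply (⟨0, hT⟩ : Fin T)),
      map_eval_pi,
      show (Measure.map (fun w => Real.sqrt (β ⟨0, hT⟩) * w) (gaussianReal 0 1))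
          = gaussianReal (Real.sqrt (β ⟨0, hT⟩) * 0)
            (⟨Real.sqrt (β ⟨0, hT⟩) ^ 2, sq_nonneg _⟩ * 1)
        from gaussianReal_map_const_mul _,
      show (Measure.map (fun y => Real.sqrt (α ⟨0, hT⟩) * x₀ + y)
            (gaussianReal (Real.sqrt (β ⟨0, hT⟩) * 0)
              (⟨Real.sqrt (β ⟨0, hT⟩) ^ 2, sq_nonneg _⟩ * 1)))
          = gaussianReal (Real.sqrt (β ⟨0, hT⟩) * 0 + Real.sqrt (α ⟨0, hT⟩) * x₀)
            (⟨Real.sqrt (β ⟨0, hT⟩) ^ 2, sq_nonneg _⟩ * 1)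
        from gaussianReal_map_const_add _]
    have h0 : (⟨0, h⟩ : Fin T) = ⟨0, hT⟩ := rfl
    congr 1
    · rw [mul_zero, zero_add, h0, habar0]
    · refine NNReal.coe_injective ?_
      rw [h0]
      push_cast
      change Real.sqrt (β ⟨0, hT⟩) ^ 2 * 1 = _
      rw [Real.sq_sqrt (hβ ⟨0, hT⟩).1.le,
        Real.coe_toNNReal _ (by rw [habar0]; linarith [hα_lt ⟨0, hT⟩]), habar0,
        hα ⟨0, hT⟩]
      ring
  | succ n IH =>
    intro h
    have hn := Nat.lt_of_succ_lt h
    have hIH := IH hn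
    obtain ⟨hXm, hXl⟩ := hXaux n hn
    have hXcomp : X ⟨n + 1, h⟩ = fun z => Real.sqrt (α ⟨n + 1, h⟩) * X ⟨n, hn⟩ z
        + Real.sqrt (β ⟨n + 1, h⟩) * z ⟨n + 1, h⟩ := funext fun z => hXrec n h z
    rw [hXcomp, step_map n h (X ⟨n, hn⟩) hXm hXl _ _ hIH]
    have hrec := habar_rec n h
    congr 1
    · rw [← mul_assoc, ← Real.sqrt_mul (hα_pos ⟨n + 1, h⟩).le, ← hrec]
    · refine NNReal.coe_injective ?_
      push_cast
      change Real.sqrt (α ⟨n + 1, h⟩) ^ 2 * ((1 - abar ⟨n, hn⟩).toNNReal : ℝ)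
        + Real.sqrt (β ⟨n + 1, h⟩) ^ 2 * 1 = _
      rw [Real.sq_sqrt (hα_pos ⟨n + 1, h⟩).le, Real.sq_sqrt (hβ ⟨n + 1, h⟩).1.le,
        Real.coe_toNNReal _ (by linarith [habar_le ⟨n, hn⟩]),
        Real.coe_toNNReal _ (by linarith [habar_le ⟨n + 1, h⟩]),
        hrec, hα ⟨n + 1, h⟩]
      ring
end

section
/- Let n be a natural number, H : Matrix (Fin n) (Fin n) ℝ a positive definite symmetric matrix, w ∈ ℝⁿ, and S a nonempty proper subset of Fin n (the set of pruned indices), with ι : S ↪ Fin n the inclusion. Write A := (H⁻¹).submatrix ι ι for the principal submatrix of H⁻¹ on S (which is positive definite, hence invertible), w_S ∈ ℝ^S for the restriction of w to S, and B := (H⁻¹).submatrix ι id ∈ Matrix S (Fin n) ℝ for the rows of H⁻¹ indexed by S. Define ŵ := w − w_S · A⁻¹ · B (a vector in ℝⁿ, where w_S·A⁻¹ ∈ ℝ^S acts on the rows of B). Then ŵ_i = 0 for every i ∈ S. -/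
open Matrix

/-- Feasibility of the Optimal Brain Surgeon update (Equation (19) of the paper):
with `H` positive definite symmetric, `S` a nonempty proper set of pruned indices,
`A = (H⁻¹)_{S,S}`, `B = (H⁻¹)_{S,:}` and `w_S` the restriction of `w` to `S`, the
updated row `ŵ = w − w_S·A⁻¹·B` vanishes on every pruned coordinate `i ∈ S`. -/
theorem obs_update_feasible (n : ℕ) (H : Matrix (Fin n) (Fin n) ℝ) (hH : H.PosDef)
    (w : Fin n → ℝ) (S : Finset (Fin n)) (hS : S.Nonempty) (hS' : S ≠ Finset.univ) :
    ∀ i ∈ S,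
      (fun j : Fin n => w j -
          Matrix.vecMul
            (Matrix.vecMul (fun s : {i // i ∈ S} => w s.1)
              (((H⁻¹).submatrix (fun s : {i // i ∈ S} => s.1)
                  (fun s : {i // i ∈ S} => s.1))⁻¹))
            ((H⁻¹).submatrix (fun s : {i // i ∈ S} => s.1) id) j) i = 0 := by
  classical
  intro i hi
  have hMpd : (H⁻¹).PosDef := hH.inv
  set M : Matrix (Fin n) (Fin n) ℝ := H⁻¹ with hM
  set ι : {i // i ∈ S} → Fin n := fun s => s.1 with hι
  set A : Matrix {i // i ∈ S} {i // i ∈ S} ℝ := M.submatrix ι ι with hAdef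
  -- A is positive definite
  have hApd : A.PosDef := by
    refine Matrix.PosDef.of_dotProduct_mulVec_pos (hMpd.isHermitian.submatrix ι) ?_
    intro x hx
    set y : Fin n → ℝ := fun j => if h : j ∈ S then x ⟨j, h⟩ else 0 with hy
    have hy0 : y ≠ 0 := by
      intro h0
      apply hx
      funext s
      have := congrFun h0 s.1
      simpa [hy, s.2] using this
    have key : ∀ v : Fin n → ℝ, (∑ j, y j * v j) = ∑ s : {i // i ∈ S}, x s * v s.1 := by
      intro v
      calc ∑ j, y j * v j = ∑ j ∈ S, y j * v j := by
            refine (Finset.sum_subset (Finset.subset_univ S) ?_).symm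
            intro j _ hj; simp [hy, hj]
        _ = ∑ s : {i // i ∈ S}, y s.1 * v s.1 := (Finset.sum_coe_sort S _).symm
        _ = ∑ s : {i // i ∈ S}, x s * v s.1 :=
            Finset.sum_congr rfl (fun s _ => by simp [hy, s.2])
    have hMy : ∀ s : {i // i ∈ S}, (M *ᵥ y) s.1 = (A *ᵥ x) s := by
      intro s
      simp only [mulVec, dotProduct, hAdef, submatrix_apply]
      calc ∑ k, M s.1 k * y k = ∑ k, y k * M s.1 k := by
            exact Finset.sum_congr rfl (fun k _ => mul_comm _ _)
        _ = ∑ t : {i // i ∈ S}, x t * M s.1 t.1 := key _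
        _ = ∑ t : {i // i ∈ S}, M (ι s) (ι t) * x t := by
            exact Finset.sum_congr rfl (fun t _ => mul_comm _ _)
    have := hMpd.dotProduct_mulVec_pos hy0
    calc (0 : ℝ) < star y ⬝ᵥ (M *ᵥ y) := this
      _ = ∑ j, y j * (M *ᵥ y) j := by simp [dotProduct]
      _ = ∑ s : {i // i ∈ S}, x s * (M *ᵥ y) s.1 := key _
      _ = ∑ s : {i // i ∈ S}, x s * (A *ᵥ x) s := by
          exact Finset.sum_congr rfl (fun s _ => by rw [hMy s])
      _ = star x ⬝ᵥ (A *ᵥ x) := by simp [dotProduct]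
  have hAinv : A⁻¹ * A = 1 := Matrix.nonsing_inv_mul A (isUnit_iff_ne_zero.mpr hApd.det_pos.ne')
  -- the key column identity
  set wS : {i // i ∈ S} → ℝ := fun s => w s.1 with hwS
  have hcol : ∀ v : {i // i ∈ S} → ℝ,
      Matrix.vecMul v (M.submatrix ι id) i = Matrix.vecMul v A ⟨i, hi⟩ := by
    intro v
    simp [vecMul, dotProduct, hAdef, hι]
  show w i - Matrix.vecMul (Matrix.vecMul wS A⁻¹) (M.submatrix ι id) i = 0
  rw [hcol, Matrix.vecMul_vecMul, hAinv, Matrix.vecMul_one]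
  simp [hwS]
end

section
/- Let n be a natural number, H : Matrix (Fin n) (Fin n) ℝ a positive definite symmetric matrix, w ∈ ℝⁿ, and S a nonempty proper subset of Fin n, with ι : S ↪ Fin n the inclusion. Write A := (H⁻¹).submatrix ι ι for the principal submatrix of H⁻¹ on S (positive definite, hence invertible), w_S ∈ ℝ^S for the restriction of w to S, and B := (H⁻¹).submatrix ι id for the rows of H⁻¹ indexed by S. Then the minimum of the quadratic form (v − w)·H·(v − w)ᵀ over all v ∈ ℝⁿ satisfying v_i = 0 for all i ∈ S equals w_S · A⁻¹ · w_Sᵀ, and it is attained at v = w − w_S · A⁻¹ · B. -/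
open Matrix

/-- The Optimal Brain Surgeon optimality result (Equations (18)–(19) of the paper):
with `H` positive definite symmetric, `S` a nonempty proper set of pruned indices,
`A = (H⁻¹)_{S,S}`, `B = (H⁻¹)_{S,:}` and `w_S` the restriction of `w` to `S`, the
minimum of the quadratic form `(v − w)·H·(v − w)ᵀ` over vectors `v` vanishing on `S`
equals the saliency `w_S·A⁻¹·w_Sᵀ`, and it is attained at `v = w − w_S·A⁻¹·B`. -/
theorem obs_optimality (n : ℕ) (H : Matrix (Fin n) (Fin n) ℝ) (hH : H.PosDef)
    (w : Fin n → ℝ) (S : Finset (Fin n)) (hS : S.Nonempty) (hS' : S ≠ Finset.univ) :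
    let A := (H⁻¹).submatrix (fun s : {i // i ∈ S} => s.1) (fun s : {i // i ∈ S} => s.1)
    let B := (H⁻¹).submatrix (fun s : {i // i ∈ S} => s.1) id
    let wS := fun s : {i // i ∈ S} => w s.1
    let vhat := fun j : Fin n => w j - Matrix.vecMul (Matrix.vecMul wS A⁻¹) B j
    IsLeast
        {q : ℝ | ∃ v : Fin n → ℝ, (∀ i ∈ S, v i = 0) ∧
          q = dotProduct (v - w) (Matrix.mulVec H (v - w))}
        (dotProduct (Matrix.vecMul wS A⁻¹) wS)
      ∧ (∀ i ∈ S, vhat i = 0)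
      ∧ dotProduct (vhat - w) (Matrix.mulVec H (vhat - w))
          = dotProduct (Matrix.vecMul wS A⁻¹) wS := by
  intro A B wS vhat
  set ι : {i // i ∈ S} → Fin n := fun s => s.1 with hιdef
  have hHdet : IsUnit H.det := hH.det_pos.ne'.isUnit
  have hHinv : (H⁻¹).PosDef := hH.inv
  -- A is positive definite
  have hA : A.PosDef := by
    refine PosDef.of_dotProduct_mulVec_pos (hHinv.1.submatrix ι) ?_
    intro x hx
    classical
    set y : Fin n → ℝ := fun j => if h : j ∈ S then x ⟨j, h⟩ else 0 with hy
    have hyne : y ≠ 0 := by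
      obtain ⟨s, hs⟩ := Function.ne_iff.mp hx
      refine Function.ne_iff.mpr ⟨s.1, ?_⟩
      simpa [hy, s.2] using hs
    have key : ∀ g : Fin n → ℝ, ∑ j, y j * g j = ∑ s, x s * g (ι s) := by
      intro g
      have h1 : ∑ j, y j * g j = ∑ j ∈ S, y j * g j := by
        refine (Finset.sum_subset (Finset.subset_univ S) ?_).symm
        intro j _ hj; simp [hy, hj]
      rw [h1, Finset.sum_subtype S (fun j => Iff.rfl) (fun j => y j * g j)]
      refine Finset.sum_congr rfl fun s _ => ?_
      simp [hy, s.2, hιdef]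
    have key' : ∀ g : Fin n → ℝ, ∑ j, g j * y j = ∑ s, g (ι s) * x s := by
      intro g
      simpa [mul_comm] using key g
    have heq : dotProduct x (A *ᵥ x) = dotProduct y (H⁻¹ *ᵥ y) := by
      unfold dotProduct Matrix.mulVec dotProduct
      rw [key (fun j => ∑ k, H⁻¹ j k * y k)]
      refine Finset.sum_congr rfl fun s _ => ?_
      rw [key' (fun k => H⁻¹ (ι s) k)]
      rfl
    have := hHinv.dotProduct_mulVec_pos hyne
    simpa [heq] using this
  have hAdet : IsUnit A.det := hA.det_pos.ne'.isUnit
  set c : {i // i ∈ S} → ℝ := Matrix.vecMul wS A⁻¹ with hc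
  have hcA : Matrix.vecMul c A = wS := by
    rw [hc, Matrix.vecMul_vecMul, Matrix.nonsing_inv_mul A hAdet, Matrix.vecMul_one]
  -- vhat vanishes on S
  have hvhatS : ∀ i ∈ S, vhat i = 0 := by
    intro i hi
    have : Matrix.vecMul c B i = Matrix.vecMul c A ⟨i, hi⟩ := rfl
    show w i - Matrix.vecMul c B i = 0
    rw [this, hcA]
    simp [wS]
  set δ : Fin n → ℝ := fun j => vhat j - w j with hδ
  have hδval : ∀ i ∈ S, δ i = -w i := by
    intro i hi; simp [hδ, hvhatS i hi]
  -- computation of δ ᵥ* H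
  have hBH : B * H = (1 : Matrix (Fin n) (Fin n) ℝ).submatrix ι id := by
    have : B * H = ((H⁻¹) * H).submatrix ι id := by
      rw [Matrix.submatrix_mul (H⁻¹) H ι id id Function.bijective_id]
      simp [B]
      rfl
    rw [this, Matrix.nonsing_inv_mul H hHdet]
  have hδH : Matrix.vecMul δ H = fun j => -∑ s, (if ι s = j then c s else 0) := by
    have hδeq : δ = -(Matrix.vecMul c B) := by
      funext j; simp [hδ, vhat, hc]
    funext j
    rw [hδeq, Matrix.neg_vecMul, Matrix.vecMul_vecMul, hBH]
    simp only [Pi.neg_apply, neg_inj]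
    unfold Matrix.vecMul dotProduct
    refine Finset.sum_congr rfl fun s _ => ?_
    simp [Matrix.one_apply, mul_ite]
  have hδHzero : ∀ j, j ∉ S → Matrix.vecMul δ H j = 0 := by
    intro j hj
    rw [hδH]
    have : ∀ s : {i // i ∈ S}, (if ι s = j then c s else 0) = 0 := by
      intro s
      have : ι s ≠ j := fun h => hj (h ▸ s.2)
      simp [this]
    simp [this]
  -- the value at δ
  have hδHδ : dotProduct δ (H *ᵥ δ) = dotProduct c wS := by
    rw [Matrix.dotProduct_mulVec, hδH]
    unfold dotProduct
    calc ∑ j, (-∑ s : {i // i ∈ S}, (if ι s = j then c s else 0)) * δ j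
        = ∑ j, ∑ s : {i // i ∈ S}, (if ι s = j then -(c s * δ j) else 0) := by
          refine Finset.sum_congr rfl fun j _ => ?_
          rw [neg_mul, Finset.sum_mul, ← Finset.sum_neg_distrib]
          exact Finset.sum_congr rfl fun s _ => by split <;> simp
      _ = ∑ s : {i // i ∈ S}, ∑ j, (if ι s = j then -(c s * δ j) else 0) :=
          Finset.sum_comm
      _ = ∑ s : {i // i ∈ S}, -(c s * δ (ι s)) := by
          refine Finset.sum_congr rfl fun s _ => ?_
          simp
      _ = ∑ s : {i // i ∈ S}, c s * wS s := by
          refine Finset.sum_congr rfl fun s _ => ?_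
          rw [hδval (ι s) s.2]
          show -(c s * -w (ι s)) = c s * w s.1
          ring
  -- cross terms vanish against vectors vanishing on S
  have hcross : ∀ e : Fin n → ℝ, (∀ i ∈ S, e i = 0) →
      dotProduct δ (H *ᵥ e) = 0 := by
    intro e he
    rw [Matrix.dotProduct_mulVec]
    unfold dotProduct
    refine Finset.sum_eq_zero fun j _ => ?_
    by_cases hj : j ∈ S
    · rw [he j hj, mul_zero]
    · rw [hδHzero j hj, zero_mul]
  have hHsymm : Hᵀ = H := by
    have := hH.1
    rwa [Matrix.IsHermitian, Matrix.conjTranspose_eq_transpose_of_trivial] at this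
  -- value of quadratic form at any admissible v
  have hdecomp : ∀ v : Fin n → ℝ, (∀ i ∈ S, v i = 0) →
      dotProduct (v - w) (H *ᵥ (v - w))
        = dotProduct c wS + dotProduct (v - vhat) (H *ᵥ (v - vhat)) := by
    intro v hv
    set e : Fin n → ℝ := v - vhat with he
    have heS : ∀ i ∈ S, e i = 0 := by
      intro i hi; simp [he, hv i hi, hvhatS i hi]
    have hsum : v - w = δ + e := by
      funext j; simp [hδ, he]
    have hc2 : dotProduct e (H *ᵥ δ) = 0 := by
      have h1 : dotProduct e (H *ᵥ δ) = dotProduct (H *ᵥ e) δ := by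
        rw [Matrix.dotProduct_mulVec]
        congr 1
        rw [← Matrix.vecMul_transpose, hHsymm]
      rw [h1, dotProduct_comm, hcross e heS]
    rw [hsum]
    rw [Matrix.mulVec_add, dotProduct_add, add_dotProduct,
      add_dotProduct, hδHδ, hcross e heS, hc2]
    ring
  have hval : dotProduct (vhat - w) (H *ᵥ (vhat - w)) = dotProduct c wS := by
    have h0 : vhat - vhat = (0 : Fin n → ℝ) := by simp
    rw [hdecomp vhat hvhatS, h0]
    simp
  refine ⟨⟨⟨vhat, hvhatS, ?_⟩, ?_⟩, hvhatS, ?_⟩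
  · -- membership: need dotProduct c wS = value at vhat
    exact hval.symm
  · -- lower bound
    rintro q ⟨v, hv, rfl⟩
    rw [hdecomp v hv]
    have : 0 ≤ dotProduct (v - vhat) (H *ᵥ (v - vhat)) := by
      have := hH.posSemidef.dotProduct_mulVec_nonneg (v - vhat)
      simpa using this
    show dotProduct c wS ≤ _
    linarith
  · rw [hval]
end
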